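/- Let p > 1 and 0 < ω < ω_p, where ω_p = p/(p+1)², and define k(u) = f'(u)·(u−β) − f(u) on (0,∞). Then k is differentiable on (0,∞) with k'(u) = f''(u)·(u−β); moreover, if α ≤ β, then k is strictly decreasing on the interval (β, c), where α = (p/(2(2p−1)))^{1/(p−1)}, β = ((p/(p+1))·(1−√(1−(p+1)²ω/p)))^{1/(p−1)}, and c = ((1+√(1−4ω))/2)^{1/(p−1)}. -/

import Mathlib

open Real Set Filter Topology

/-- For `p > 1` and `0 < ω < ω_p`: `k(u) = f'(u)(u - β) - f(u)` is differentiable on `(0,∞)`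
with `k'(u) = f''(u)(u - β)` (here `f'`, `f''` are the derivatives of `f`); moreover, if
`α ≤ β` then `k` is strictly decreasing on `(β, c)`. -/
theorem k_deriv_and_strictAnti (p ω : ℝ) (hp : 1 < p) (hω : 0 < ω)
    (hωp : ω < p / (p + 1) ^ 2)
    (f : ℝ → ℝ)
    (hf : ∀ u > (0 : ℝ), f u = -ω * u + u ^ p - u ^ (2 * p - 1))
    (α β c : ℝ)
    (hα : α = (p / (2 * (2 * p - 1))) ^ (1 / (p - 1)))
    (hβ : β = (p / (p + 1) * (1 - Real.sqrt (1 - (p + 1) ^ 2 * ω / p))) ^ (1 / (p - 1)))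
    (hc : c = ((1 + Real.sqrt (1 - 4 * ω)) / 2) ^ (1 / (p - 1)))
    (k : ℝ → ℝ) (hk : ∀ u > (0 : ℝ), k u = deriv f u * (u - β) - f u) :
    (∀ u > (0 : ℝ), HasDerivAt k (deriv (deriv f) u * (u - β)) u) ∧
    (α ≤ β → StrictAntiOn k (Set.Ioo β c)) := by
  have hp1 : (0:ℝ) < p - 1 := by linarith
  set F : ℝ → ℝ := fun u => -ω * u + u ^ p - u ^ (2 * p - 1) with hF
  set F1 : ℝ → ℝ := fun u => -ω + p * u ^ (p - 1) - (2 * p - 1) * u ^ (2 * p - 2) with hF1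
  set F2 : ℝ → ℝ := fun u =>
    p * (p - 1) * u ^ (p - 2) - (2 * p - 1) * (2 * p - 2) * u ^ (2 * p - 3) with hF2
  have hdF : ∀ u > (0:ℝ), HasDerivAt F (F1 u) u := by
    intro u hu
    have h1 : HasDerivAt (fun x : ℝ => x ^ p) (p * u ^ (p - 1)) u :=
      Real.hasDerivAt_rpow_const (Or.inl (ne_of_gt hu))
    have h2 : HasDerivAt (fun x : ℝ => x ^ (2 * p - 1)) ((2 * p - 1) * u ^ (2 * p - 1 - 1)) u :=
      Real.hasDerivAt_rpow_const (Or.inl (ne_of_gt hu))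
    have h0 : HasDerivAt (fun x : ℝ => -ω * x) (-ω) u := by
      simpa using (hasDerivAt_id u).const_mul (-ω)
    have := (h0.add h1).sub h2
    have he : (2:ℝ) * p - 1 - 1 = 2 * p - 2 := by ring
    rw [he] at this
    exact this
  have hdF1 : ∀ u > (0:ℝ), HasDerivAt F1 (F2 u) u := by
    intro u hu
    have h1 : HasDerivAt (fun x : ℝ => x ^ (p - 1)) ((p - 1) * u ^ (p - 1 - 1)) u :=
      Real.hasDerivAt_rpow_const (Or.inl (ne_of_gt hu))
    have h2 : HasDerivAt (fun x : ℝ => x ^ (2 * p - 2)) ((2 * p - 2) * u ^ (2 * p - 2 - 1)) u :=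
      Real.hasDerivAt_rpow_const (Or.inl (ne_of_gt hu))
    have h0 : HasDerivAt (fun _ : ℝ => -ω) (0:ℝ) u := hasDerivAt_const u (-ω)
    have := (h0.add (h1.const_mul p)).sub (h2.const_mul (2 * p - 1))
    have he1 : p - 1 - 1 = p - 2 := by ring
    have he2 : (2:ℝ) * p - 2 - 1 = 2 * p - 3 := by ring
    rw [he1, he2] at this
    convert this using 1
    · rfl
    · rfl
    · rfl
    simp [hF2]; ring
  have hderivf : ∀ u > (0:ℝ), deriv f u = F1 u := by
    intro u hu
    have hev : f =ᶠ[𝓝 u] F :=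
      Filter.eventuallyEq_of_mem (isOpen_Ioi.mem_nhds hu) (fun v hv => hf v hv)
    rw [hev.deriv_eq, (hdF u hu).deriv]
  have hd2 : ∀ u > (0:ℝ), deriv (deriv f) u = F2 u := by
    intro u hu
    have hev : deriv f =ᶠ[𝓝 u] F1 :=
      Filter.eventuallyEq_of_mem (isOpen_Ioi.mem_nhds hu) (fun v hv => hderivf v hv)
    rw [hev.deriv_eq, (hdF1 u hu).deriv]
  have hkey : ∀ u > (0:ℝ), HasDerivAt k (F2 u * (u - β)) u := by
    intro u hu
    have hK : HasDerivAt (fun v => F1 v * (v - β) - F v)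
        (F2 u * (u - β) + F1 u * 1 - F1 u) u :=
      ((hdF1 u hu).mul ((hasDerivAt_id u).sub_const β)).sub (hdF u hu)
    have hK' : HasDerivAt (fun v => F1 v * (v - β) - F v) (F2 u * (u - β)) u := by
      convert hK using 1; ring
    apply hK'.congr_of_eventuallyEq
    refine Filter.eventuallyEq_of_mem (isOpen_Ioi.mem_nhds hu) (fun v hv => ?_)
    rw [hk v hv, hderivf v hv, hf v hv]
  have hpart1 : ∀ u > (0:ℝ), HasDerivAt k (deriv (deriv f) u * (u - β)) u := by
    intro u hu
    rw [hd2 u hu]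
    exact hkey u hu
  refine ⟨hpart1, fun hαβ => ?_⟩
  have hbase : (0:ℝ) < p / (2 * (2 * p - 1)) := by
    apply div_pos <;> linarith
  have hα0 : 0 < α := by rw [hα]; exact Real.rpow_pos_of_pos hbase _
  have hβ0 : 0 < β := lt_of_lt_of_le hα0 hαβ
  have hF2neg : ∀ u, α < u → F2 u < 0 := by
    intro u hu
    have hu0 : (0:ℝ) < u := lt_trans hα0 hu
    have hpow : p / (2 * (2 * p - 1)) < u ^ (p - 1) := by
      have h := Real.rpow_lt_rpow (le_of_lt hα0) hu hp1
      rwa [hα, ← Real.rpow_mul (le_of_lt hbase),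
        one_div_mul_cancel (ne_of_gt hp1), Real.rpow_one] at h
    have hsplit : u ^ (2 * p - 3) = u ^ (p - 2) * u ^ (p - 1) := by
      rw [← Real.rpow_add hu0]; congr 1; ring
    have hup2 : 0 < u ^ (p - 2) := Real.rpow_pos_of_pos hu0 _
    have hlt : p < u ^ (p - 1) * (2 * (2 * p - 1)) :=
      (div_lt_iff₀ (by linarith)).mp hpow
    have : F2 u = u ^ (p - 2) * (p * (p - 1) - (2 * p - 1) * (2 * p - 2) * u ^ (p - 1)) := by
      simp only [hF2, hsplit]; ring
    rw [this]
    apply mul_neg_of_pos_of_neg hup2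
    nlinarith
  apply strictAntiOn_of_deriv_neg (convex_Ioo β c)
  · intro u hu
    have hu0 : (0:ℝ) < u := lt_trans hβ0 hu.1
    exact (hpart1 u hu0).continuousAt.continuousWithinAt
  · intro u hu
    rw [interior_Ioo] at hu
    have hu0 : (0:ℝ) < u := lt_trans hβ0 hu.1
    rw [(hpart1 u hu0).deriv, hd2 u hu0]
    exact mul_neg_of_neg_of_pos (hF2neg u (lt_of_le_of_lt hαβ hu.1)) (sub_pos.2 hu.1)
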